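/- Under the hypotheses of the previous identity (q,r,s,w > 0, r = q+w, u,v < 1, p ∈ [0,1]), if additionally p·u + (1-p)·v ≤ u·v, then E[ s/(t+w) ] ≤ s/(q+w). -/

import Mathlib

theorem barrier_expectation_bound (q r s w u v p : ℝ)
    (hq : 0 < q) (hr : 0 < r) (hs : 0 < s) (hw : 0 < w)
    (hu : u < 1) (hv : v < 1) (hp0 : 0 ≤ p) (hp1 : p ≤ 1)
    (hrqw : r = q + w)
    (hbound : p * u + (1 - p) * v ≤ u * v) :
    p * (s / ((q - u * r) + w)) + (1 - p) * (s / ((q - v * r) + w))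
      ≤ s / (q + w) := by
  have hu' : (0:ℝ) < 1 - u := by linarith
  have hv' : (0:ℝ) < 1 - v := by linarith
  have h1 : q - u * r + w = r * (1 - u) := by rw [hrqw]; ring
  have h2 : q - v * r + w = r * (1 - v) := by rw [hrqw]; ring
  rw [h1, h2, ← hrqw]
  have key : p * (s / (r * (1 - u))) + (1 - p) * (s / (r * (1 - v)))
      = s * (p * (1 - v) + (1 - p) * (1 - u)) / (r * ((1 - u) * (1 - v))) := by
    field_simp
  rw [key, div_le_div_iff₀ (by positivity) hr]
  nlinarith [mul_pos hs hr, hs.le]
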